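/- Let β ∈ (0, 1/100), let Q be an axis-parallel square of sidelength 4^{−j}, subdivided into 4^{10} dyadic subsquares of sidelength 4^{−j−10} arranged in the pattern of the product Cantor construction restricted to the four corner quarters (i.e., the subsquares of K_{j+10} × K_{j+10} contained in Q when Q is a square of K_j × K_j). If a set E ⊆ ℝ² intersects Q and intersects all 4^{10} of these subsquares, then for every line l in ℝ², sup_{x ∈ E ∩ 3Q} dist(x, l) ≥ 0.01·diam(3Q)/2, i.e., the Jones β-number satisfies β_E(3Q) ≥ 0.01. -/
import Mathlib


/-- Euclidean distance on ℝ × ℝ. -/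
noncomputable def dist2 (x y : ℝ × ℝ) : ℝ :=
  Real.sqrt ((x.1 - y.1) ^ 2 + (x.2 - y.2) ^ 2)

/-- The relative positions within a unit square of the `2^10` Cantor intervals of the
tenth generation of the middle-half Cantor construction. -/
def cantorOffsets : Set ℝ :=
  {x | ∃ d : Fin 10 → Bool,
    x = ∑ i : Fin 10, (if d i then (3 : ℝ) else 0) * (4 : ℝ) ^ (-((i : ℤ) + 1))}

lemma aux_max19 (a b n : ℝ) (hn : 0 ≤ n) (h2 : n^2 = a^2 + b^2) : n ≤ |a - b| ∨ n ≤ |a + b| := by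
  rcases le_total (|a+b|) (|a-b|) with h | h
  · left
    nlinarith [sq_abs (a-b), sq_abs (a+b), abs_nonneg (a-b), abs_nonneg (a+b),
      mul_self_le_mul_self (abs_nonneg (a+b)) h]
  · right
    nlinarith [sq_abs (a-b), sq_abs (a+b), abs_nonneg (a-b), abs_nonneg (a+b),
      mul_self_le_mul_self (abs_nonneg (a-b)) h]

lemma aux_sqrt_le19 (a b : ℝ) : Real.sqrt (a^2+b^2) ≤ |a| + |b| := by
  rw [← Real.sqrt_sq (by positivity : (0:ℝ) ≤ |a|+|b|)]
  apply Real.sqrt_le_sqrt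
  nlinarith [sq_abs a, sq_abs b, mul_nonneg (abs_nonneg a) (abs_nonneg b)]

lemma aux_sqrt2_le19 : Real.sqrt 2 ≤ 1.5 := by
  nlinarith [Real.sq_sqrt (by norm_num : (0:ℝ) ≤ 2), Real.sqrt_nonneg 2]

/-- Cauchy–Schwarz in the plane. -/
lemma aux_cs19 (a b c d : ℝ) : |a*c + b*d| ≤ Real.sqrt (a^2+b^2) * Real.sqrt (c^2+d^2) := by
  rw [← Real.sqrt_mul (by positivity), ← Real.sqrt_sq_eq_abs]
  apply Real.sqrt_le_sqrt
  nlinarith [sq_nonneg (a*d - b*c)]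

set_option maxHeartbeats 2000000 in
/-- If a set `E` meets a square `Q` of sidelength `4⁻ʲ` and all `4¹⁰` Cantor subsquares
of sidelength `4⁻ʲ⁻¹⁰` of `Q` (arranged in the product Cantor pattern), then no line
comes within `0.01·diam(3Q)/2` of all of `E ∩ 3Q`: the Jones β-number of `E` on `3Q`
is at least `0.01`. -/
theorem stmt19 (j : ℕ) (q : ℝ × ℝ) (E : Set (ℝ × ℝ))
    (hQ : (E ∩ (Set.Icc q.1 (q.1 + (4 : ℝ) ^ (-(j : ℤ))) ×ˢ
      Set.Icc q.2 (q.2 + (4 : ℝ) ^ (-(j : ℤ))))).Nonempty)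
    (hsub : ∀ s ∈ cantorOffsets, ∀ t ∈ cantorOffsets,
      (E ∩ (Set.Icc (q.1 + (4 : ℝ) ^ (-(j : ℤ)) * s)
              (q.1 + (4 : ℝ) ^ (-(j : ℤ)) * s + (4 : ℝ) ^ (-(j : ℤ) - 10)) ×ˢ
            Set.Icc (q.2 + (4 : ℝ) ^ (-(j : ℤ)) * t)
              (q.2 + (4 : ℝ) ^ (-(j : ℤ)) * t + (4 : ℝ) ^ (-(j : ℤ) - 10)))).Nonempty) :
    ∀ p v : ℝ × ℝ, v ≠ 0 →
      0.01 * (3 * (4 : ℝ) ^ (-(j : ℤ)) * Real.sqrt 2) / 2 ≤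
        sSup {d : ℝ | ∃ x ∈ E ∩ (Set.Icc (q.1 - (4 : ℝ) ^ (-(j : ℤ)))
            (q.1 + 2 * (4 : ℝ) ^ (-(j : ℤ))) ×ˢ
          Set.Icc (q.2 - (4 : ℝ) ^ (-(j : ℤ))) (q.2 + 2 * (4 : ℝ) ^ (-(j : ℤ)))),
          d = sInf {e : ℝ | ∃ t : ℝ, e = dist2 x (p + t • v)}} := by
  intro p v hv
  set L : ℝ := (4:ℝ)^(-(j:ℤ)) with hLdef
  have hLpos : 0 < L := by positivity
  have hε : (4:ℝ)^(-(j:ℤ)-10) = L / 1048576 := by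
    rw [hLdef, sub_eq_add_neg, zpow_add₀ (by norm_num : (4:ℝ) ≠ 0) (-(j:ℤ)) (-10)]
    norm_num
    ring
  have h0 : (0:ℝ) ∈ cantorOffsets := ⟨fun _ => false, by simp⟩
  set s1 : ℝ := 1 - (4:ℝ)^(-10:ℤ) with hs1def
  have hs1v : s1 = 1 - 1/1048576 := by rw [hs1def]; norm_num
  have h1 : s1 ∈ cantorOffsets := ⟨fun _ => true, by rw [hs1def]; norm_num [Fin.sum_univ_succ]⟩
  have hs1b : L*s1 + L/1048576 = L := by rw [hs1v]; ring
  have hs1nn : 0 ≤ L*s1 := by rw [hs1v]; exact mul_nonneg hLpos.le (by norm_num)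
  clear_value L s1
  -- the four corner points
  obtain ⟨x00, hx00E, hx00m⟩ := hsub 0 h0 0 h0
  obtain ⟨x01, hx01E, hx01m⟩ := hsub 0 h0 s1 h1
  obtain ⟨x10, hx10E, hx10m⟩ := hsub s1 h1 0 h0
  obtain ⟨x11, hx11E, hx11m⟩ := hsub s1 h1 s1 h1
  simp only [Set.mem_prod, Set.mem_Icc, hε, mul_zero, add_zero] at hx00m hx01m hx10m hx11m
  obtain ⟨⟨a00l, a00r⟩, b00l, b00r⟩ := hx00m
  obtain ⟨⟨a01l, a01r⟩, b01l, b01r⟩ := hx01m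
  obtain ⟨⟨a10l, a10r⟩, b10l, b10r⟩ := hx10m
  obtain ⟨⟨a11l, a11r⟩, b11l, b11r⟩ := hx11m
  -- big square membership
  have m00 : (q.1 - L ≤ x00.1 ∧ x00.1 ≤ q.1+2*L) ∧ (q.2 - L ≤ x00.2 ∧ x00.2 ≤ q.2+2*L) :=
    ⟨⟨by linarith, by linarith⟩, ⟨by linarith, by linarith⟩⟩
  have m01 : (q.1 - L ≤ x01.1 ∧ x01.1 ≤ q.1+2*L) ∧ (q.2 - L ≤ x01.2 ∧ x01.2 ≤ q.2+2*L) :=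
    ⟨⟨by linarith, by linarith⟩, ⟨by linarith, by linarith⟩⟩
  have m10 : (q.1 - L ≤ x10.1 ∧ x10.1 ≤ q.1+2*L) ∧ (q.2 - L ≤ x10.2 ∧ x10.2 ≤ q.2+2*L) :=
    ⟨⟨by linarith, by linarith⟩, ⟨by linarith, by linarith⟩⟩
  have m11 : (q.1 - L ≤ x11.1 ∧ x11.1 ≤ q.1+2*L) ∧ (q.2 - L ≤ x11.2 ∧ x11.2 ≤ q.2+2*L) :=
    ⟨⟨by linarith, by linarith⟩, ⟨by linarith, by linarith⟩⟩
  -- normal direction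
  have hvne : v.1 ≠ 0 ∨ v.2 ≠ 0 := by
    by_contra h
    push_neg at h
    exact hv (Prod.ext h.1 h.2)
  have hsq : 0 < v.1^2 + v.2^2 := by
    rcases hvne with h | h
    · exact add_pos_of_pos_of_nonneg
        (lt_of_le_of_ne (sq_nonneg v.1) (Ne.symm (pow_ne_zero 2 h))) (sq_nonneg v.2)
    · exact add_pos_of_nonneg_of_pos (sq_nonneg v.1)
        (lt_of_le_of_ne (sq_nonneg v.2) (Ne.symm (pow_ne_zero 2 h)))
  set n : ℝ := Real.sqrt (v.1^2 + v.2^2) with hndef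
  have hn : 0 < n := Real.sqrt_pos.mpr hsq
  have hn2 : n^2 = v.1^2 + v.2^2 := Real.sq_sqrt hsq.le
  have hv1 : |v.1| ≤ n := by
    rw [← Real.sqrt_sq_eq_abs]
    exact Real.sqrt_le_sqrt (le_add_of_nonneg_right (sq_nonneg v.2))
  have hv2 : |v.2| ≤ n := by
    rw [← Real.sqrt_sq_eq_abs]
    exact Real.sqrt_le_sqrt (le_add_of_nonneg_left (sq_nonneg v.1))
  -- distance to the line bounds the linear functional
  have hdist : ∀ x : ℝ×ℝ, ∀ t : ℝ,
      |v.2 * (x.1 - p.1) - v.1 * (x.2 - p.2)| ≤ n * dist2 x (p + t • v) := by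
    intro x t
    have h := aux_cs19 v.2 (-v.1) (x.1 - (p.1 + t*v.1)) (x.2 - (p.2 + t*v.2))
    have e1 : v.2 * (x.1 - (p.1+t*v.1)) + (-v.1) * (x.2 - (p.2+t*v.2))
        = v.2*(x.1-p.1) - v.1*(x.2-p.2) := by ring
    have e2 : Real.sqrt (v.2^2 + (-v.1)^2) = n := by
      rw [show v.2^2 + (-v.1)^2 = v.1^2+v.2^2 by ring]
    have e3 : dist2 x (p + t • v)
        = Real.sqrt ((x.1 - (p.1+t*v.1))^2 + (x.2-(p.2+t*v.2))^2) := by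
      simp [dist2, Prod.fst_add, Prod.snd_add, Prod.smul_fst, Prod.smul_snd, smul_eq_mul]
    rw [e1, e2] at h
    rw [e3]
    exact h
  set c : ℝ := 0.01 * (3 * L * Real.sqrt 2) / 2 with hcdef
  have hcle : c ≤ 0.0225 * L := by
    rw [hcdef]
    calc 0.01 * (3 * L * Real.sqrt 2) / 2 = (0.015*L) * Real.sqrt 2 := by ring
      _ ≤ (0.015*L) * 1.5 := by
          apply mul_le_mul_of_nonneg_left aux_sqrt2_le19
          positivity
      _ = 0.0225 * L := by ring
  clear_value n c
  have hchalf : 2 * c ≤ L*s1 - 2*(L/1048576) := by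
    rw [hs1v]; linarith
  -- one of the two diagonal directions is far from orthogonal to the line
  have hmax : n ≤ |v.1 - v.2| ∨ n ≤ |v.1 + v.2| := aux_max19 v.1 v.2 n hn.le hn2
  -- key claim: one of the four points is far from the line
  have key : ∃ x : ℝ × ℝ, x ∈ E ∧
      ((q.1 - L ≤ x.1 ∧ x.1 ≤ q.1+2*L) ∧ (q.2 - L ≤ x.2 ∧ x.2 ≤ q.2+2*L)) ∧
      c * n ≤ |v.2 * (x.1 - p.1) - v.1 * (x.2 - p.2)| := by
    rcases hmax with hA | hB
    · -- main diagonal x00 ↔ x11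
      set D : ℝ := v.2*(x11.1-x00.1) - v.1*(x11.2-x00.2) with hDdef
      clear_value D
      have hu1 : |(x11.1 - x00.1) - L*s1| ≤ L/1048576 := abs_le.mpr ⟨by linarith, by linarith⟩
      have hu2 : |(x11.2 - x00.2) - L*s1| ≤ L/1048576 := abs_le.mpr ⟨by linarith, by linarith⟩
      have herr : |D - L*s1*(v.2 - v.1)| ≤ (L/1048576)*n + (L/1048576)*n := by
        have e : D - L*s1*(v.2-v.1)
            = v.2*((x11.1-x00.1) - L*s1) - v.1*((x11.2-x00.2) - L*s1) := by
          rw [hDdef]; ring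
        rw [e]
        refine (abs_sub _ _).trans ?_
        rw [abs_mul, abs_mul]
        have h1 : |v.2| * |(x11.1-x00.1) - L*s1| ≤ n * (L/1048576) :=
          mul_le_mul hv2 hu1 (abs_nonneg _) hn.le
        have h2 : |v.1| * |(x11.2-x00.2) - L*s1| ≤ n * (L/1048576) :=
          mul_le_mul hv1 hu2 (abs_nonneg _) hn.le
        linarith
      have hmain : L*s1*n ≤ |L*s1*(v.2 - v.1)| := by
        rw [abs_mul, show |v.2 - v.1| = |v.1 - v.2| from abs_sub_comm _ _,
          abs_of_nonneg hs1nn]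
        exact mul_le_mul_of_nonneg_left hA hs1nn
      have hD : (L*s1 - 2*(L/1048576)) * n ≤ |D| := by
        have h' := abs_sub_abs_le_abs_sub (L*s1*(v.2-v.1)) D
        rw [abs_sub_comm] at h'
        have hexp : (L*s1 - 2*(L/1048576)) * n = L*s1*n - ((L/1048576)*n + (L/1048576)*n) := by
          ring
        rw [hexp]
        linarith [hmain, herr, h']
      have hsum : |D| ≤ |v.2*(x11.1-p.1) - v.1*(x11.2-p.2)|
          + |v.2*(x00.1-p.1) - v.1*(x00.2-p.2)| := by
        have e : D = (v.2*(x11.1-p.1) - v.1*(x11.2-p.2))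
            - (v.2*(x00.1-p.1) - v.1*(x00.2-p.2)) := by rw [hDdef]; ring
        rw [e]; exact abs_sub _ _
      have h2cn : 2*(c*n) ≤ |v.2*(x11.1-p.1) - v.1*(x11.2-p.2)|
          + |v.2*(x00.1-p.1) - v.1*(x00.2-p.2)| := by
        have hmul := mul_le_mul_of_nonneg_right hchalf hn.le
        linarith [hsum, hD, hmul]
      rcases le_total (|v.2*(x00.1-p.1) - v.1*(x00.2-p.2)|)
          (|v.2*(x11.1-p.1) - v.1*(x11.2-p.2)|) with h | h
      · exact ⟨x11, hx11E, m11, by linarith⟩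
      · exact ⟨x00, hx00E, m00, by linarith⟩
    · -- anti-diagonal x01 ↔ x10
      set D : ℝ := v.2*(x10.1-x01.1) - v.1*(x10.2-x01.2) with hDdef
      clear_value D
      have hu1 : |(x10.1 - x01.1) - L*s1| ≤ L/1048576 := abs_le.mpr ⟨by linarith, by linarith⟩
      have hu2 : |(x10.2 - x01.2) + L*s1| ≤ L/1048576 := abs_le.mpr ⟨by linarith, by linarith⟩
      have herr : |D - L*s1*(v.2 + v.1)| ≤ (L/1048576)*n + (L/1048576)*n := by
        have e : D - L*s1*(v.2+v.1)
            = v.2*((x10.1-x01.1) - L*s1) - v.1*((x10.2-x01.2) + L*s1) := by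
          rw [hDdef]; ring
        rw [e]
        refine (abs_sub _ _).trans ?_
        rw [abs_mul, abs_mul]
        have h1 : |v.2| * |(x10.1-x01.1) - L*s1| ≤ n * (L/1048576) :=
          mul_le_mul hv2 hu1 (abs_nonneg _) hn.le
        have h2 : |v.1| * |(x10.2-x01.2) + L*s1| ≤ n * (L/1048576) :=
          mul_le_mul hv1 hu2 (abs_nonneg _) hn.le
        linarith
      have hmain : L*s1*n ≤ |L*s1*(v.2 + v.1)| := by
        rw [abs_mul, show |v.2 + v.1| = |v.1 + v.2| from by rw [add_comm],
          abs_of_nonneg hs1nn]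
        exact mul_le_mul_of_nonneg_left hB hs1nn
      have hD : (L*s1 - 2*(L/1048576)) * n ≤ |D| := by
        have h' := abs_sub_abs_le_abs_sub (L*s1*(v.2+v.1)) D
        rw [abs_sub_comm] at h'
        have hexp : (L*s1 - 2*(L/1048576)) * n = L*s1*n - ((L/1048576)*n + (L/1048576)*n) := by
          ring
        rw [hexp]
        linarith [hmain, herr, h']
      have hsum : |D| ≤ |v.2*(x10.1-p.1) - v.1*(x10.2-p.2)|
          + |v.2*(x01.1-p.1) - v.1*(x01.2-p.2)| := by
        have e : D = (v.2*(x10.1-p.1) - v.1*(x10.2-p.2))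
            - (v.2*(x01.1-p.1) - v.1*(x01.2-p.2)) := by rw [hDdef]; ring
        rw [e]; exact abs_sub _ _
      have h2cn : 2*(c*n) ≤ |v.2*(x10.1-p.1) - v.1*(x10.2-p.2)|
          + |v.2*(x01.1-p.1) - v.1*(x01.2-p.2)| := by
        have hmul := mul_le_mul_of_nonneg_right hchalf hn.le
        linarith [hsum, hD, hmul]
      rcases le_total (|v.2*(x01.1-p.1) - v.1*(x01.2-p.2)|)
          (|v.2*(x10.1-p.1) - v.1*(x10.2-p.2)|) with h | h
      · exact ⟨x10, hx10E, m10, by linarith⟩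
      · exact ⟨x01, hx01E, m01, by linarith⟩
  obtain ⟨x, hxE, hxm, hxfar⟩ := key
  -- assemble
  have hmemS : sInf {e : ℝ | ∃ t : ℝ, e = dist2 x (p + t • v)} ∈
      {d : ℝ | ∃ x ∈ E ∩ (Set.Icc (q.1 - L) (q.1 + 2*L) ×ˢ Set.Icc (q.2 - L) (q.2 + 2*L)),
        d = sInf {e : ℝ | ∃ t : ℝ, e = dist2 x (p + t • v)}} :=
    ⟨x, ⟨hxE, by simp only [Set.mem_prod, Set.mem_Icc]; exact hxm⟩, rfl⟩
  have hbdd : BddAbove {d : ℝ | ∃ x ∈ E ∩ (Set.Icc (q.1 - L) (q.1 + 2*L) ×ˢ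
      Set.Icc (q.2 - L) (q.2 + 2*L)),
        d = sInf {e : ℝ | ∃ t : ℝ, e = dist2 x (p + t • v)}} := by
    refine ⟨|q.1 - p.1| + |q.2 - p.2| + 4*L, ?_⟩
    rintro d ⟨y, ⟨hyE, hym⟩, rfl⟩
    simp only [Set.mem_prod, Set.mem_Icc] at hym
    have h0mem : dist2 y p ∈ {e : ℝ | ∃ t : ℝ, e = dist2 y (p + t • v)} :=
      ⟨0, by rw [zero_smul, add_zero]⟩
    have hblow : BddBelow {e : ℝ | ∃ t : ℝ, e = dist2 y (p + t • v)} := by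
      refine ⟨0, ?_⟩
      rintro e ⟨t, rfl⟩
      exact Real.sqrt_nonneg _
    have h1 := csInf_le hblow h0mem
    have h2 : dist2 y p ≤ |y.1 - p.1| + |y.2 - p.2| := by
      have e : dist2 y p = Real.sqrt ((y.1-p.1)^2 + (y.2-p.2)^2) := rfl
      rw [e]
      exact aux_sqrt_le19 _ _
    have h3 : |y.1 - p.1| ≤ |q.1 - p.1| + 2*L := by
      have h4 : |y.1 - q.1| ≤ 2*L := abs_le.mpr ⟨by linarith [hym.1.1], by linarith [hym.1.2]⟩
      calc |y.1 - p.1| ≤ |y.1 - q.1| + |q.1 - p.1| := abs_sub_le _ _ _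
        _ ≤ |q.1 - p.1| + 2*L := by linarith
    have h5 : |y.2 - p.2| ≤ |q.2 - p.2| + 2*L := by
      have h4 : |y.2 - q.2| ≤ 2*L := abs_le.mpr ⟨by linarith [hym.2.1], by linarith [hym.2.2]⟩
      calc |y.2 - p.2| ≤ |y.2 - q.2| + |q.2 - p.2| := abs_sub_le _ _ _
        _ ≤ |q.2 - p.2| + 2*L := by linarith
    linarith
  have hge : c ≤ sInf {e : ℝ | ∃ t : ℝ, e = dist2 x (p + t • v)} := by
    refine le_csInf ⟨dist2 x (p + (0:ℝ) • v), 0, rfl⟩ ?_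
    rintro e ⟨t, rfl⟩
    have h := hdist x t
    have h' : n * c ≤ n * dist2 x (p + t • v) := by linarith [hxfar.trans h]
    exact le_of_mul_le_mul_left h' hn
  exact hge.trans (le_csSup hbdd hmemS)
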